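/- Let p be a probability distribution on ℝ^d with bounded support, mean μ = E[X], and covariance Σ = Cov(X). For t ∈ (−1,1) define W_t(y;x) = exp(−‖x − ty‖²/(2(1−t)²)), D_t(x) = E_{X~p}[W_t(X;x)], N_t(x) = E_{X~p}[X W_t(X;x)], and m_t(x) = N_t(x)/D_t(x). Then for every fixed x ∈ ℝ^d, m_0(x) = μ and (d/dt) m_t(x) |_{t=0} = Σx. -/

import Mathlib

open MeasureTheory ProbabilityTheory RealInnerProductSpace

noncomputable section

/-- The mean `μ = E_{X ~ p}[X]` of a measure `p` on `ℝ^d`. -/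
def meanVec {d : ℕ} (p : Measure (EuclideanSpace ℝ (Fin d))) : EuclideanSpace ℝ (Fin d) :=
  ∫ y, y ∂p

/-- The covariance matrix `Σ = E[(X − μ)(X − μ)^T]` of a measure `p` on `ℝ^d`. -/
def covMatrix {d : ℕ} (p : Measure (EuclideanSpace ℝ (Fin d))) :
    Matrix (Fin d) (Fin d) ℝ :=
  Matrix.of fun i j => ∫ y, (y i - meanVec p i) * (y j - meanVec p j) ∂p

/-- `W_t(y; x) = exp(−‖x − ty‖²/(2(1−t)²))`. -/
def Wt {d : ℕ} (t : ℝ) (y x : EuclideanSpace ℝ (Fin d)) : ℝ :=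
  Real.exp (-‖x - t • y‖ ^ 2 / (2 * (1 - t) ^ 2))

/-- `D_t(x) = E_{X ~ p}[W_t(X; x)]`. -/
def Dt {d : ℕ} (p : Measure (EuclideanSpace ℝ (Fin d))) (t : ℝ)
    (x : EuclideanSpace ℝ (Fin d)) : ℝ :=
  ∫ y, Wt t y x ∂p

/-- `N_t(x) = E_{X ~ p}[X · W_t(X; x)]`. -/
def Nt {d : ℕ} (p : Measure (EuclideanSpace ℝ (Fin d))) (t : ℝ)
    (x : EuclideanSpace ℝ (Fin d)) : EuclideanSpace ℝ (Fin d) :=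
  ∫ y, Wt t y x • y ∂p

/-- The denoiser `m_t(x) = N_t(x)/D_t(x)`. -/
def mtDen {d : ℕ} (p : Measure (EuclideanSpace ℝ (Fin d))) (t : ℝ)
    (x : EuclideanSpace ℝ (Fin d)) : EuclideanSpace ℝ (Fin d) :=
  (Dt p t x)⁻¹ • Nt p t x

-- AUX START
def Fp {d : ℕ} (x y : EuclideanSpace ℝ (Fin d)) (t : ℝ) : ℝ :=
  -(‖x‖ ^ 2 - 2 * t * ⟪x, y⟫ + t ^ 2 * ‖y‖ ^ 2) / (2 * (1 - t) ^ 2)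

def Fp' {d : ℕ} (x y : EuclideanSpace ℝ (Fin d)) (t : ℝ) : ℝ :=
  ((2 * ⟪x, y⟫ - 2 * t * ‖y‖ ^ 2) * (2 * (1 - t) ^ 2)
    - -(‖x‖ ^ 2 - 2 * t * ⟪x, y⟫ + t ^ 2 * ‖y‖ ^ 2) * -(4 * (1 - t))) / (2 * (1 - t) ^ 2) ^ 2

lemma norm_sub_smul_sq {d : ℕ} (x y : EuclideanSpace ℝ (Fin d)) (t : ℝ) :
    ‖x - t • y‖ ^ 2 = ‖x‖ ^ 2 - 2 * t * ⟪x, y⟫ + t ^ 2 * ‖y‖ ^ 2 := by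
  rw [norm_sub_sq_real, real_inner_smul_right, norm_smul, Real.norm_eq_abs, mul_pow, sq_abs]
  ring

lemma Wt_eq_exp_Fp {d : ℕ} (t : ℝ) (y x : EuclideanSpace ℝ (Fin d)) :
    Wt t y x = Real.exp (Fp x y t) := by
  rw [Wt, Fp, norm_sub_smul_sq]

lemma Fp_zero {d : ℕ} (x y : EuclideanSpace ℝ (Fin d)) : Fp x y 0 = -‖x‖ ^ 2 / 2 := by
  simp [Fp]

lemma Fp'_zero {d : ℕ} (x y : EuclideanSpace ℝ (Fin d)) : Fp' x y 0 = ⟪x, y⟫ - ‖x‖ ^ 2 := by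
  simp only [Fp']
  norm_num
  ring

lemma hasDerivAt_Fp {d : ℕ} (x y : EuclideanSpace ℝ (Fin d)) {t : ℝ} (ht : t ≠ 1) :
    HasDerivAt (Fp x y) (Fp' x y t) t := by
  have h1t : (1 : ℝ) - t ≠ 0 := sub_ne_zero.2 (Ne.symm ht)
  have hv0 : (2 * (1 - t) ^ 2 : ℝ) ≠ 0 := by positivity
  have hA : HasDerivAt (fun s : ℝ => 2 * s * ⟪x, y⟫) (2 * 1 * ⟪x, y⟫) t :=
    ((hasDerivAt_id t).const_mul 2).mul_const _
  have hB : HasDerivAt (fun s : ℝ => s ^ 2 * ‖y‖ ^ 2) (2 * t ^ 1 * ‖y‖ ^ 2) t :=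
    (hasDerivAt_pow 2 t).mul_const _
  have hnum : HasDerivAt (fun s : ℝ => -(‖x‖ ^ 2 - 2 * s * ⟪x, y⟫ + s ^ 2 * ‖y‖ ^ 2))
      (-((0 - 2 * 1 * ⟪x, y⟫) + 2 * t ^ 1 * ‖y‖ ^ 2)) t :=
    (((hasDerivAt_const t (‖x‖ ^ 2)).sub hA).add hB).neg
  have hden : HasDerivAt (fun s : ℝ => 2 * (1 - s) ^ 2)
      (2 * (↑2 * (1 - t) ^ 1 * (0 - 1))) t :=
    (((hasDerivAt_const t (1:ℝ)).sub (hasDerivAt_id' t)).pow 2).const_mul 2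
  have := hnum.div hden hv0
  refine this.congr_deriv ?_
  rw [Fp']
  ring

lemma continuous_Fp_y {d : ℕ} (x : EuclideanSpace ℝ (Fin d)) (t : ℝ) :
    Continuous (fun y => Fp x y t) := by
  have h : Continuous fun y : EuclideanSpace ℝ (Fin d) => ⟪x, y⟫ :=
    continuous_const.inner continuous_id
  unfold Fp
  apply Continuous.div_const
  continuity

lemma continuous_Fp'_y {d : ℕ} (x : EuclideanSpace ℝ (Fin d)) (t : ℝ) :
    Continuous (fun y => Fp' x y t) := by
  have h : Continuous fun y : EuclideanSpace ℝ (Fin d) => ⟪x, y⟫ :=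
    continuous_const.inner continuous_id
  unfold Fp'
  apply Continuous.div_const
  continuity

lemma continuous_Wt_y {d : ℕ} (t : ℝ) (x : EuclideanSpace ℝ (Fin d)) :
    Continuous (fun y => Wt t y x) := by
  simp only [Wt_eq_exp_Fp]
  exact Real.continuous_exp.comp (continuous_Fp_y x t)

lemma continuousOn_K {d : ℕ} (x : EuclideanSpace ℝ (Fin d)) (R : ℝ) :
    ContinuousOn (fun q : ℝ × EuclideanSpace ℝ (Fin d) =>
      Real.exp (Fp x q.2 q.1) * Fp' x q.2 q.1)
      (Set.Icc (-(1/2) : ℝ) (1/2) ×ˢ Metric.closedBall 0 R) := by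
  have hc : Continuous fun q : ℝ × EuclideanSpace ℝ (Fin d) => ⟪x, q.2⟫ :=
    continuous_const.inner continuous_snd
  have hn2 : Continuous fun q : ℝ × EuclideanSpace ℝ (Fin d) => ‖q.2‖ ^ 2 :=
    (continuous_snd.norm).pow 2
  have hd0 : Continuous fun q : ℝ × EuclideanSpace ℝ (Fin d) => 2 * (1 - q.1) ^ 2 :=
    continuous_const.mul ((continuous_const.sub continuous_fst).pow 2)
  have hN : Continuous fun q : ℝ × EuclideanSpace ℝ (Fin d) =>
      -(‖x‖ ^ 2 - 2 * q.1 * ⟪x, q.2⟫ + q.1 ^ 2 * ‖q.2‖ ^ 2) :=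
    (((continuous_const.sub ((continuous_const.mul continuous_fst).mul hc)).add
      ((continuous_fst.pow 2).mul hn2))).neg
  have hden : ∀ q : ℝ × EuclideanSpace ℝ (Fin d),
      q ∈ Set.Icc (-(1/2) : ℝ) (1/2) ×ˢ Metric.closedBall 0 R →
      (2 * (1 - q.1) ^ 2 : ℝ) ≠ 0 := by
    rintro ⟨t, y⟩ ⟨⟨-, ht2⟩, -⟩
    have : (1:ℝ) - t ≠ 0 := by norm_num at ht2 ⊢; linarith
    positivity
  have h1 : ContinuousOn (fun q : ℝ × EuclideanSpace ℝ (Fin d) => Fp x q.2 q.1)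
      (Set.Icc (-(1/2) : ℝ) (1/2) ×ˢ Metric.closedBall 0 R) := by
    unfold Fp
    exact ContinuousOn.div hN.continuousOn hd0.continuousOn hden
  have h2 : ContinuousOn (fun q : ℝ × EuclideanSpace ℝ (Fin d) => Fp' x q.2 q.1)
      (Set.Icc (-(1/2) : ℝ) (1/2) ×ˢ Metric.closedBall 0 R) := by
    unfold Fp'
    have hnum : Continuous fun q : ℝ × EuclideanSpace ℝ (Fin d) =>
        (2 * ⟪x, q.2⟫ - 2 * q.1 * ‖q.2‖ ^ 2) * (2 * (1 - q.1) ^ 2)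
          - -(‖x‖ ^ 2 - 2 * q.1 * ⟪x, q.2⟫ + q.1 ^ 2 * ‖q.2‖ ^ 2) * -(4 * (1 - q.1)) :=
      (((continuous_const.mul hc).sub ((continuous_const.mul continuous_fst).mul hn2)).mul
        hd0).sub (hN.mul (continuous_const.mul (continuous_const.sub continuous_fst)).neg)
    exact ContinuousOn.div hnum.continuousOn (hd0.pow 2).continuousOn
      (fun q hq => pow_ne_zero 2 (hden q hq))
  exact (Real.continuous_exp.comp_continuousOn h1).mul h2

lemma integrable_of_cont {d : ℕ} {G : Type*} [NormedAddCommGroup G]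
    (R : ℝ) (p : Measure (EuclideanSpace ℝ (Fin d))) [IsFiniteMeasure p]
    (hsupp : p (Metric.ball (0 : EuclideanSpace ℝ (Fin d)) R)ᶜ = 0)
    {f : EuclideanSpace ℝ (Fin d) → G} (hf : Continuous f) : Integrable f p := by
  obtain ⟨C, hC⟩ :=
    (isCompact_closedBall (0 : EuclideanSpace ℝ (Fin d)) R).exists_bound_of_continuousOn
      hf.continuousOn
  have hae : ∀ᵐ y ∂p, y ∈ Metric.ball (0 : EuclideanSpace ℝ (Fin d)) R :=
    MeasureTheory.mem_ae_iff.2 hsupp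
  refine ⟨hf.aestronglyMeasurable, HasFiniteIntegral.mono' (hasFiniteIntegral_const C) ?_⟩
  filter_upwards [hae] with y hy
  exact hC y (Metric.mem_closedBall.2 (by
    have := mem_ball_zero_iff.1 hy
    simpa [dist_eq_norm] using this.le))

/-- for `p` with bounded support (contained in some ball `B_R(0)`), mean `μ`, and
covariance `Σ`, for every fixed `x`, `m_0(x) = μ` and `(d/dt) m_t(x)|_{t=0} = Σx`. -/
theorem denoiser_first_two_coefficients {d : ℕ} (R : ℝ) (hR : 0 < R)
    (p : Measure (EuclideanSpace ℝ (Fin d))) [IsProbabilityMeasure p]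
    (hsupp : p (Metric.ball (0 : EuclideanSpace ℝ (Fin d)) R)ᶜ = 0)
    (x : EuclideanSpace ℝ (Fin d)) :
    mtDen p 0 x = meanVec p ∧
    deriv (fun t => mtDen p t x) 0 = Matrix.toEuclideanLin (covMatrix p) x := by
  set μ : EuclideanSpace ℝ (Fin d) := meanVec p with hμ
  set a : ℝ := ‖x‖ ^ 2 with ha
  set c0 : ℝ := Real.exp (-‖x‖ ^ 2 / 2) with hc0def
  have hc0 : c0 ≠ 0 := Real.exp_ne_zero _
  have hW0 : ∀ y : EuclideanSpace ℝ (Fin d), Wt 0 y x = c0 := fun y => by rw [Wt_eq_exp_Fp, Fp_zero]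
  have hae : ∀ᵐ y ∂p, ‖y‖ < R := by
    have := MeasureTheory.mem_ae_iff.2 hsupp
    filter_upwards [this] with y hy using mem_ball_zero_iff.1 hy
  have hcin : Continuous fun y : EuclideanSpace ℝ (Fin d) => ⟪x, y⟫ := continuous_const.inner continuous_id
  have hmuint : Integrable (fun y : EuclideanSpace ℝ (Fin d) => y) p := integrable_of_cont R p hsupp continuous_id
  -- values at 0
  have hD0 : Dt p 0 x = c0 := by
    rw [Dt]
    simp only [hW0]
    simp
  have hN0 : Nt p 0 x = c0 • μ := by
    rw [Nt]
    simp only [hW0]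
    rw [integral_smul, hμ, meanVec]
  have part1 : mtDen p 0 x = μ := by
    rw [mtDen, hD0, hN0, smul_smul, inv_mul_cancel₀ hc0, one_smul]
  refine ⟨part1, ?_⟩
  -- the uniform bound
  obtain ⟨C, hC⟩ := ((isCompact_Icc (a := (-(1/2) : ℝ))
    (b := (1/2 : ℝ))).prod (isCompact_closedBall (0 : EuclideanSpace ℝ (Fin d)) R)).exists_bound_of_continuousOn
    (continuousOn_K x R)
  have hball : ∀ t : ℝ, t ∈ Metric.ball (0:ℝ) (1/2) → ∀ y : EuclideanSpace ℝ (Fin d), ‖y‖ < R →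
      ((t, y) : ℝ × EuclideanSpace ℝ (Fin d)) ∈ Set.Icc (-(1/2) : ℝ) (1/2) ×ˢ Metric.closedBall (0 : EuclideanSpace ℝ (Fin d)) R := by
    intro t ht y hy
    have ht' : |t| < 1/2 := by simpa [Real.norm_eq_abs] using mem_ball_zero_iff.1 ht
    constructor
    · constructor <;> [linarith [neg_abs_le t]; linarith [le_abs_self t]]
    · exact Metric.mem_closedBall.2 (by simpa [dist_eq_norm] using hy.le)
  have hC0 : 0 ≤ C :=
    le_trans (norm_nonneg _) (hC ((0 : ℝ), (0 : EuclideanSpace ℝ (Fin d))) (by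
      constructor
      · constructor <;> norm_num
      · simpa using hR.le))
  have htne1 : ∀ t : ℝ, t ∈ Metric.ball (0:ℝ) (1/2) → t ≠ 1 := by
    intro t ht
    have : |t| < 1/2 := by simpa [Real.norm_eq_abs] using mem_ball_zero_iff.1 ht
    intro h; rw [h] at this; norm_num at this
  have hderivW : ∀ (y : EuclideanSpace ℝ (Fin d)) (t : ℝ), t ∈ Metric.ball (0:ℝ) (1/2) →
      HasDerivAt (fun s => Wt s y x) (Real.exp (Fp x y t) * Fp' x y t) t := by
    intro y t ht
    simp only [Wt_eq_exp_Fp]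
    exact (hasDerivAt_Fp x y (htne1 t ht)).exp
  -- derivative of Dt
  have hD := hasDerivAt_integral_of_dominated_loc_of_deriv_le (μ := p)
    (F := fun t (y : EuclideanSpace ℝ (Fin d)) => Wt t y x)
    (F' := fun t (y : EuclideanSpace ℝ (Fin d)) => Real.exp (Fp x y t) * Fp' x y t)
    (bound := fun _ => C) (s := Metric.ball (0:ℝ) (1/2)) (Metric.ball_mem_nhds (0:ℝ) one_half_pos)
    (Filter.Eventually.of_forall fun t => (continuous_Wt_y t x).aestronglyMeasurable)
    (integrable_of_cont R p hsupp (continuous_Wt_y 0 x))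
    (((Real.continuous_exp.comp (continuous_Fp_y x 0)).mul
      (continuous_Fp'_y x 0)).aestronglyMeasurable)
    (by
      filter_upwards [hae] with y hy t ht
      exact hC ((t, y)) (hball t ht y hy))
    (integrable_const C)
    (Filter.Eventually.of_forall fun y t ht => hderivW y t ht)
  -- derivative of Nt
  have hN := hasDerivAt_integral_of_dominated_loc_of_deriv_le (μ := p)
    (F := fun t (y : EuclideanSpace ℝ (Fin d)) => Wt t y x • y)
    (F' := fun t (y : EuclideanSpace ℝ (Fin d)) => (Real.exp (Fp x y t) * Fp' x y t) • y)
    (bound := fun _ => C * R) (s := Metric.ball (0:ℝ) (1/2)) (Metric.ball_mem_nhds (0:ℝ) one_half_pos)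
    (Filter.Eventually.of_forall fun t =>
      ((continuous_Wt_y t x).smul continuous_id).aestronglyMeasurable)
    (integrable_of_cont R p hsupp ((continuous_Wt_y 0 x).smul continuous_id))
    ((((Real.continuous_exp.comp (continuous_Fp_y x 0)).mul
      (continuous_Fp'_y x 0)).smul continuous_id).aestronglyMeasurable)
    (by
      filter_upwards [hae] with y hy t ht
      have h1 : ‖Real.exp (Fp x y t) * Fp' x y t‖ ≤ C := hC ((t, y)) (hball t ht y hy)
      calc ‖(Real.exp (Fp x y t) * Fp' x y t) • y‖
          = ‖Real.exp (Fp x y t) * Fp' x y t‖ * ‖y‖ := norm_smul _ _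
        _ ≤ C * R := mul_le_mul h1 hy.le (norm_nonneg _) hC0)
    (integrable_const (C * R))
    (Filter.Eventually.of_forall fun y t ht => (hderivW y t ht).smul_const y)
  -- coordinate continuity
  have hcoord : ∀ j : Fin d, Continuous fun y : EuclideanSpace ℝ (Fin d) => y j :=
    fun j => (EuclideanSpace.proj (𝕜 := ℝ) j).continuous
  have hint1 : Integrable (fun y : EuclideanSpace ℝ (Fin d) => ⟪x, y⟫) p :=
    integrable_of_cont R p hsupp hcin
  have hintxy : Integrable (fun y : EuclideanSpace ℝ (Fin d) => ⟪x, y⟫ • y) p :=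
    integrable_of_cont R p hsupp (hcin.smul continuous_id)
  set J : EuclideanSpace ℝ (Fin d) := ∫ y, ⟪x, y⟫ • y ∂p with hJ
  have hinnerint : (∫ y, ⟪x, y⟫ ∂p) = ⟪x, μ⟫ := integral_inner hmuint x
  -- value of the Dt-derivative integral
  have hDval : HasDerivAt (fun t => Dt p t x) (c0 * (⟪x, μ⟫ - a)) 0 := by
    have hval : (∫ y, Real.exp (Fp x y 0) * Fp' x y 0 ∂p) = c0 * (⟪x, μ⟫ - a) := by
      simp only [Fp_zero, Fp'_zero]
      rw [integral_const_mul, integral_sub hint1 (integrable_const _), hinnerint,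
        integral_const]
      simp
      rfl
    exact hval ▸ hD.2
  -- value of the Nt-derivative integral
  have hNval : HasDerivAt (fun t => Nt p t x) (c0 • (J - a • μ)) 0 := by
    have hval : (∫ y, (Real.exp (Fp x y 0) * Fp' x y 0) • y ∂p) = c0 • (J - a • μ) := by
      simp only [Fp_zero, Fp'_zero]
      simp_rw [mul_smul]
      rw [integral_smul]
      congr 1
      simp_rw [sub_smul]
      have hsm : Continuous fun y : EuclideanSpace ℝ (Fin d) => a • y := continuous_const_smul a
      rw [integral_sub hintxy (integrable_of_cont R p hsupp hsm), integral_smul]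
      rw [hJ, hμ, meanVec]
    exact hval ▸ hN.2
  -- derivative of mtDen
  have hD0ne : Dt p 0 x ≠ 0 := by rw [hD0]; exact hc0
  have hM := (hDval.inv hD0ne).smul hNval
  have hder : deriv (fun t => mtDen p t x) 0 =
      (Dt p 0 x)⁻¹ • (c0 • (J - a • μ)) +
        (-(c0 * (⟪x, μ⟫ - a)) / Dt p 0 x ^ 2) • Nt p 0 x := by
    rw [show (fun t => mtDen p t x) = fun t => (Dt p t x)⁻¹ • Nt p t x from rfl]
    exact hM.deriv
  rw [hder, hD0, hN0]
  -- simplify the scalar coefficients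
  have hsc1 : c0⁻¹ • (c0 • (J - a • μ)) = J - a • μ := by
    rw [smul_smul, inv_mul_cancel₀ hc0, one_smul]
  have hsc2 : (-(c0 * (⟪x, μ⟫ - a)) / c0 ^ 2) • (c0 • μ) = (a - ⟪x, μ⟫) • μ := by
    rw [smul_smul]
    congr 1
    field_simp
    ring
  rw [hsc1, hsc2]
  have hcollect : J - a • μ + (a - ⟪x, μ⟫) • μ = J - ⟪x, μ⟫ • μ := by module
  rw [hcollect]
  -- componentwise computation
  ext i
  have hproj : ∀ (f : EuclideanSpace ℝ (Fin d) → EuclideanSpace ℝ (Fin d)),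
      Integrable f p → (∫ y, f y ∂p) i = ∫ y, f y i ∂p := fun f hf =>
    (ContinuousLinearMap.integral_comp_comm (EuclideanSpace.proj (𝕜 := ℝ) i) hf).symm
  have hμi : μ i = ∫ y, y i ∂p := by
    rw [hμ, meanVec]; exact hproj (fun y => y) hmuint
  have hJi : J i = ∫ y, ⟪x, y⟫ * y i ∂p := by
    rw [hJ, hproj _ hintxy]
    rfl
  have hLHS : (J - ⟪x, μ⟫ • μ) i = (∫ y, ⟪x, y⟫ * y i ∂p) - ⟪x, μ⟫ * μ i := by
    simp [hJi]
  rw [hLHS]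
  have hRHS : Matrix.toEuclideanLin (covMatrix p) x i =
      ∑ j, (∫ y, (y i - μ i) * (y j - μ j) ∂p) * x j := by
    simp [Matrix.toEuclideanLin_apply, Matrix.mulVec, dotProduct, covMatrix, hμ]
  rw [hRHS]
  -- move the sum inside the integral
  have hgint : ∀ j : Fin d,
      Integrable (fun y : EuclideanSpace ℝ (Fin d) => (y i - μ i) * (y j - μ j) * x j) p :=
    fun j => integrable_of_cont R p hsupp
      ((((hcoord i).sub continuous_const).mul ((hcoord j).sub continuous_const)).mul
        continuous_const)
  have hsum : ∑ j, (∫ y, (y i - μ i) * (y j - μ j) ∂p) * x j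
      = ∫ y, ∑ j, (y i - μ i) * (y j - μ j) * x j ∂p := by
    rw [integral_finset_sum _ (fun j _ => hgint j)]
    congr 1
    funext j
    exact (integral_mul_const _ _).symm
  rw [hsum]
  -- pointwise identity
  have hpt : ∀ y : EuclideanSpace ℝ (Fin d),
      ∑ j, (y i - μ i) * (y j - μ j) * x j
        = ⟪x, y⟫ * y i - (⟪x, μ⟫ * y i + μ i * ⟪x, y⟫ - ⟪x, μ⟫ * μ i) := by
    intro y
    have hx1 : ⟪x, y⟫ = ∑ j, x j * y j := by
      simp [PiLp.inner_apply, RCLike.inner_apply]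
      exact Finset.sum_congr rfl fun j _ => mul_comm _ _
    have hx2 : ⟪x, μ⟫ = ∑ j, x j * μ j := by
      simp [PiLp.inner_apply, RCLike.inner_apply]
      exact Finset.sum_congr rfl fun j _ => mul_comm _ _
    rw [hx1, hx2]
    simp only [Finset.sum_mul, Finset.mul_sum]
    rw [← Finset.sum_add_distrib, ← Finset.sum_sub_distrib, ← Finset.sum_sub_distrib]
    exact Finset.sum_congr rfl fun j _ => by ring
  simp_rw [hpt]
  -- split the integral
  have hintyi : Integrable (fun y : EuclideanSpace ℝ (Fin d) => ⟪x, y⟫ * y i) p :=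
    integrable_of_cont R p hsupp (hcin.mul (hcoord i))
  have hint2 : Integrable (fun y : EuclideanSpace ℝ (Fin d) => ⟪x, μ⟫ * y i) p :=
    integrable_of_cont R p hsupp (continuous_const.mul (hcoord i))
  have hint3 : Integrable (fun y : EuclideanSpace ℝ (Fin d) => μ i * ⟪x, y⟫) p :=
    integrable_of_cont R p hsupp (continuous_const.mul hcin)
  have hintAB : Integrable (fun y : EuclideanSpace ℝ (Fin d) =>
      ⟪x, μ⟫ * y i + μ i * ⟪x, y⟫) p := hint2.add hint3
  have hintB : Integrable (fun y : EuclideanSpace ℝ (Fin d) =>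
      ⟪x, μ⟫ * y i + μ i * ⟪x, y⟫ - ⟪x, μ⟫ * μ i) p :=
    hintAB.sub (integrable_const _)
  rw [integral_sub hintyi hintB]
  congr 1
  rw [integral_sub hintAB (integrable_const _), integral_add hint2 hint3,
    integral_const_mul, integral_const_mul, hinnerint, ← hμi, integral_const]
  simp
  ring

end
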